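/- Let 0 < q < 1 and a, b parameters with all q-shifted denominators nonzero. With γ_n = (q^{n/2}-q^{-n/2})/(q^{1/2}-q^{-1/2}), B_j = q^{1/4}(1+q^{1/2})(1-q^{(a+b)/2})(q^{a/2}-q^{b/2})q^j / [2(1-q^{j+(a+b)/2})(1-q^{j+(a+b)/2+1})], and r+s = (q^{(2a+1)/4}+q^{-(2a+1)/4})/2 - (q^{(2b+1)/4}+q^{-(2b+1)/4})/2, the formula b_n = (γ_n - γ_{n-1}) Σ_{j=0}^{n-1} B_j - (r+s)γ_n equals b_n = (q^{a/2}-q^{b/2}) γ_n (1+q^{n+a+b+1/2}) q^{-(2a+2b+1)/4} / (2(1-q^{n+(a+b)/2})) for all n ≥ 0. -/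

import Mathlib

set_option maxHeartbeats 2000000

theorem stmt_19 (q : ℝ) (hq0 : 0 < q) (hq1 : q < 1) (a b : ℝ)
    (hden : ∀ n : ℕ, 1 - q ^ ((n : ℝ) + (a + b) / 2) ≠ 0)
    (γ : ℤ → ℝ)
    (hγ : ∀ n : ℤ, γ n = (q ^ ((n : ℝ) / 2) - q ^ (-((n : ℝ) / 2)))
        / (q ^ (1/2 : ℝ) - q ^ (-(1/2) : ℝ)))
    (B : ℕ → ℝ)
    (hB : ∀ j : ℕ, B j =
      q ^ (1/4 : ℝ) * (1 + q ^ (1/2 : ℝ)) * (1 - q ^ ((a + b) / 2)) * (q ^ (a / 2) - q ^ (b / 2))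
        * q ^ (j : ℝ)
      / (2 * (1 - q ^ ((j : ℝ) + (a + b) / 2)) * (1 - q ^ ((j : ℝ) + (a + b) / 2 + 1))))
    (r s : ℝ)
    (hr : r = (q ^ ((2 * a + 1) / 4) + q ^ (-(2 * a + 1) / 4)) / 2)
    (hs : s = -(q ^ ((2 * b + 1) / 4) + q ^ (-(2 * b + 1) / 4)) / 2) :
    ∀ n : ℕ,
      (γ (n : ℤ) - γ ((n : ℤ) - 1)) * (∑ j ∈ Finset.range n, B j) - (r + s) * γ (n : ℤ)
      = (q ^ (a / 2) - q ^ (b / 2)) * γ (n : ℤ) * (1 + q ^ ((n : ℝ) + a + b + 1/2))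
          * q ^ (-(2 * a + 2 * b + 1) / 4)
        / (2 * (1 - q ^ ((n : ℝ) + (a + b) / 2))) := by
  have hq1' : (1 : ℝ) - q ≠ 0 := by linarith
  -- closed form for the sum
  have hS : ∀ n : ℕ, (∑ j ∈ Finset.range n, B j)
      = q ^ (1/4 : ℝ) * (1 + q ^ (1/2 : ℝ)) * (q ^ (a / 2) - q ^ (b / 2))
          * (1 - q ^ ((n : ℝ)))
        / (2 * (1 - q) * (1 - q ^ ((n : ℝ) + (a + b) / 2))) := by
    intro n
    induction n with
    | zero => simp [Real.rpow_natCast]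
    | succ n ih =>
      rw [Finset.sum_range_succ, ih, hB]
      have hd0 := hden n
      have hd1 := hden (n + 1)
      push_cast at hd1 ⊢
      have e1 : q ^ ((n : ℝ) + (a + b) / 2) = q ^ ((n : ℝ)) * q ^ ((a + b) / 2) :=
        Real.rpow_add hq0 _ _
      have e2 : q ^ ((n : ℝ) + (a + b) / 2 + 1)
          = q ^ ((n : ℝ)) * q ^ ((a + b) / 2) * q := by
        rw [Real.rpow_add hq0, Real.rpow_one, Real.rpow_add hq0]
      have e3 : q ^ ((n : ℝ) + 1) = q ^ ((n : ℝ)) * q := by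
        rw [Real.rpow_add hq0, Real.rpow_one]
      have e4 : q ^ ((n : ℝ) + 1 + (a + b) / 2)
          = q ^ ((n : ℝ)) * q ^ ((a + b) / 2) * q := by
        rw [show (n : ℝ) + 1 + (a + b) / 2 = (n : ℝ) + (a + b) / 2 + 1 by ring, e2]
      rw [e1] at hd0
      rw [e4] at hd1
      rw [e1, e2, e3, e4]
      set X := q ^ ((n : ℝ)) with hX
      set D := q ^ ((a + b) / 2) with hD
      have hd1' : 1 - X * q * D ≠ 0 := by rwa [mul_right_comm] at hd1
      field_simp
      ring
  intro n
  rw [hS, hγ, hγ, hr, hs]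
  push_cast
  have hqle := hq0.le
  set V := q ^ (1/4 : ℝ) with hV
  set Qh := q ^ ((n : ℝ) / 2) with hQh
  set A := q ^ (a / 2) with hA
  set Bb := q ^ (b / 2) with hBb
  have eVq : V * V * V * V = q := by
    rw [hV, ← Real.rpow_add hq0, ← Real.rpow_add hq0, ← Real.rpow_add hq0]
    norm_num
  have ehalf : q ^ (1/2 : ℝ) = V * V := by
    rw [hV, ← Real.rpow_add hq0]; norm_num
  have enhalf : q ^ (-(1/2) : ℝ) = (V * V)⁻¹ := by
    rw [show (-(1/2) : ℝ) = -(1/2 : ℝ) by norm_num, Real.rpow_neg hqle, ehalf]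
  have emn : q ^ (-((n : ℝ) / 2)) = Qh⁻¹ := by
    rw [Real.rpow_neg hqle, hQh]
  have en1 : q ^ (((n : ℝ) - 1) / 2) = Qh * (V * V)⁻¹ := by
    rw [show ((n : ℝ) - 1) / 2 = (n : ℝ) / 2 + -(1/2) by ring, Real.rpow_add hq0, enhalf, hQh]
  have emn1 : q ^ (-(((n : ℝ) - 1) / 2)) = Qh⁻¹ * (V * V) := by
    rw [show -(((n : ℝ) - 1) / 2) = -((n : ℝ) / 2) + 1/2 by ring, Real.rpow_add hq0, emn, ehalf]
  have era : q ^ ((2 * a + 1) / 4) = A * V := by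
    rw [show (2 * a + 1) / 4 = a / 2 + 1/4 by ring, Real.rpow_add hq0, hA, hV]
  have erna : q ^ (-(2 * a + 1) / 4) = (A * V)⁻¹ := by
    rw [show -(2 * a + 1) / 4 = -((2 * a + 1) / 4) by ring, Real.rpow_neg hqle, era]
  have erb : q ^ ((2 * b + 1) / 4) = Bb * V := by
    rw [show (2 * b + 1) / 4 = b / 2 + 1/4 by ring, Real.rpow_add hq0, hBb, hV]
  have ernb : q ^ (-(2 * b + 1) / 4) = (Bb * V)⁻¹ := by
    rw [show -(2 * b + 1) / 4 = -((2 * b + 1) / 4) by ring, Real.rpow_neg hqle, erb]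
  have eN : q ^ ((n : ℝ)) = Qh * Qh := by
    rw [show (n : ℝ) = (n : ℝ) / 2 + (n : ℝ) / 2 by ring, Real.rpow_add hq0, hQh]
  have eNc : q ^ ((n : ℝ) + (a + b) / 2) = Qh * Qh * A * Bb := by
    rw [show (n : ℝ) + (a + b) / 2 = ((n : ℝ) / 2 + (n : ℝ) / 2 + a / 2) + b / 2 by ring,
      Real.rpow_add hq0, Real.rpow_add hq0, Real.rpow_add hq0, hQh, hA, hBb]
  have eBig : q ^ ((n : ℝ) + a + b + 1/2) = Qh * Qh * A * A * Bb * Bb * V * V := by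
    rw [show (n : ℝ) + a + b + 1/2
        = (((((((n : ℝ) / 2 + (n : ℝ) / 2) + a / 2) + a / 2) + b / 2) + b / 2) + 1/4) + 1/4
        by ring]
    rw [Real.rpow_add hq0, Real.rpow_add hq0, Real.rpow_add hq0, Real.rpow_add hq0,
      Real.rpow_add hq0, Real.rpow_add hq0, Real.rpow_add hq0, hQh, hA, hBb, hV]
  have ernab : q ^ (-(2 * a + 2 * b + 1) / 4) = (A * Bb * V)⁻¹ := by
    rw [show -(2 * a + 2 * b + 1) / 4 = -(a / 2 + (b / 2 + 1/4)) by ring,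
      Real.rpow_neg hqle, Real.rpow_add hq0, Real.rpow_add hq0, hA, hBb, hV,
      mul_assoc]
  have hVpos : 0 < V := Real.rpow_pos_of_pos hq0 _
  have hQpos : 0 < Qh := Real.rpow_pos_of_pos hq0 _
  have hApos : 0 < A := Real.rpow_pos_of_pos hq0 _
  have hBpos : 0 < Bb := Real.rpow_pos_of_pos hq0 _
  have hVne : V ≠ 0 := ne_of_gt hVpos
  have hQne : Qh ≠ 0 := ne_of_gt hQpos
  have hAne : A ≠ 0 := ne_of_gt hApos
  have hBne : Bb ≠ 0 := ne_of_gt hBpos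
  have hu1 : V * V < 1 := by
    rw [← ehalf]
    exact Real.rpow_lt_one hqle hq1 (by norm_num)
  have hune : V * V - (V * V)⁻¹ ≠ 0 := by
    have h1 : (1 : ℝ) < (V * V)⁻¹ := (one_lt_inv_iff₀).2 ⟨by positivity, hu1⟩
    nlinarith
  have hdn : 1 - Qh * Qh * A * Bb ≠ 0 := by rw [← eNc]; exact hden n
  have hq4 : V * V * V * V - 1 ≠ 0 := by
    rw [eVq]; intro h; apply hq1'; linarith
  have hsub : V * V - (V * V)⁻¹ = (V * V * V * V - 1) / (V * V) := by
    field_simp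
  have h1mq : 1 - V * V * V * V ≠ 0 := by rw [eVq]; exact hq1'
  rw [ehalf, enhalf, emn, en1, emn1, era, erna, erb, ernb, eN, eNc, eBig, ernab, ← eVq, hsub]
  have hV4 : 1 - V ^ 4 ≠ 0 := by rw [show V ^ 4 = V * V * V * V by ring]; exact h1mq
  have hdd : 1 - Qh ^ 2 * A * Bb ≠ 0 := by rw [show Qh ^ 2 * A * Bb = Qh * Qh * A * Bb by ring]; exact hdn
  field_simp
  ring
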